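/- Let N and N_R be positive integers, and let F : ℝ → ℝ be twice differentiable and satisfy Kummer's differential equation σ·F''(σ) + (N_R − σ)·F'(σ) − N·F(σ) = 0 for all σ ∈ ℝ. For a ∈ ℝ define M(s, a) = (1 − s)^{−N} F(a s/(1 − s)) for s ≠ 1. Then for every a ∈ ℝ and every s ≠ 1, s(1 − s)^2 · ∂_s^2 M(s, a) − [ 2(N + 1) s (1 − s) − (1 − s) N_R + a s ] · ∂_s M(s, a) + N [ (N + 1) s − N_R − a ] · M(s, a) = 0, where ∂_s denotes the partial derivative with respect to s. -/

import Mathlib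

set_option maxHeartbeats 1000000 in
/-- If `F` is twice differentiable and satisfies Kummer's equation
`σ F'' + (N_R − σ) F' − N F = 0`, and `M(s,a) = (1−s)^{−N} F(as/(1−s))`, then
`s(1−s)² ∂_s² M − [2(N+1)s(1−s) − (1−s)N_R + as] ∂_s M + N[(N+1)s − N_R − a] M = 0`
for every `a` and every `s ≠ 1`. -/
theorem stmt4 (N NR : ℕ) (hN : 0 < N) (hNR : 0 < NR) (F : ℝ → ℝ)
    (hF : Differentiable ℝ F) (hF' : Differentiable ℝ (deriv F))
    (hKummer : ∀ σ : ℝ,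
      σ * deriv (deriv F) σ + ((NR : ℝ) - σ) * deriv F σ - (N : ℝ) * F σ = 0)
    (M : ℝ → ℝ → ℝ)
    (hM : ∀ s a : ℝ, M s a = (1 - s) ^ (-(N : ℤ)) * F (a * s / (1 - s))) :
    ∀ (a s : ℝ), s ≠ 1 →
      s * (1 - s) ^ 2 * deriv (deriv (fun s' => M s' a)) s
        - (2 * ((N : ℝ) + 1) * s * (1 - s) - (1 - s) * (NR : ℝ) + a * s)
            * deriv (fun s' => M s' a) s
        + (N : ℝ) * (((N : ℝ) + 1) * s - (NR : ℝ) - a) * M s a = 0 := by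
  intro a s hs
  have hts : (1 : ℝ) - s ≠ 0 := sub_ne_zero.mpr (Ne.symm hs)
  set G : ℝ → ℝ := fun x => (1 - x) ^ (-(N : ℤ)) * F (a * x / (1 - x)) with hG
  have hMG : (fun s' => M s' a) = G := funext fun x => hM x a
  set D1 : ℝ → ℝ := fun x =>
    (N : ℝ) * F (a * x / (1 - x)) / (1 - x) ^ (N + 1)
      + a * deriv F (a * x / (1 - x)) / (1 - x) ^ (N + 2) with hD1def
  set D2 : ℝ → ℝ := fun x =>
    ((N : ℝ) * ((N : ℝ) + 1)) * F (a * x / (1 - x)) / (1 - x) ^ (N + 2)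
      + (a * (2 * (N : ℝ) + 2)) * deriv F (a * x / (1 - x)) / (1 - x) ^ (N + 3)
      + a ^ 2 * deriv (deriv F) (a * x / (1 - x)) / (1 - x) ^ (N + 4) with hD2def
  have hu : ∀ x : ℝ, x ≠ 1 → HasDerivAt (fun y => a * y / (1 - y)) (a / (1 - x) ^ 2) x := by
    intro x hx
    have htx : (1 : ℝ) - x ≠ 0 := sub_ne_zero.mpr (Ne.symm hx)
    have h1 : HasDerivAt (fun y : ℝ => 1 - y) (-1) x := (hasDerivAt_id x).const_sub 1
    have h2 : HasDerivAt (fun y : ℝ => a * y) a x := by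
      simpa using (hasDerivAt_id x).const_mul a
    have := h2.div h1 htx
    refine this.congr_deriv ?_
    field_simp
    ring
  have hD1 : ∀ x : ℝ, x ≠ 1 → HasDerivAt G (D1 x) x := by
    intro x hx
    have htx : (1 : ℝ) - x ≠ 0 := sub_ne_zero.mpr (Ne.symm hx)
    have h1 : HasDerivAt (fun y : ℝ => 1 - y) (-1) x := (hasDerivAt_id x).const_sub 1
    have hpow : HasDerivAt (fun y : ℝ => (1 - y) ^ (-(N : ℤ)))
        ((-(N : ℤ) : ℝ) * (1 - x) ^ (-(N : ℤ) - 1) * (-1)) x := by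
      have := (hasDerivAt_zpow (-(N : ℤ)) (1 - x) (Or.inl htx)).comp x h1
      simpa [Function.comp_def] using this
    have hFu : HasDerivAt (fun y => F (a * y / (1 - y)))
        (deriv F (a * x / (1 - x)) * (a / (1 - x) ^ 2)) x :=
      (hF _).hasDerivAt.comp x (hu x hx)
    have := hpow.mul hFu
    refine this.congr_deriv ?_
    have e1 : (1 - x) ^ (-(N : ℤ)) = ((1 - x) ^ N)⁻¹ := by
      rw [zpow_neg, zpow_natCast]
    have e2 : (1 - x) ^ (-(N : ℤ) - 1) = ((1 - x) ^ (N + 1))⁻¹ := by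
      rw [← zpow_natCast (1 - x) (N + 1), ← zpow_neg]
      congr 1
      push_cast
      ring
    rw [hD1def, e1, e2]
    field_simp
    push_cast
    ring
  have hD2 : ∀ x : ℝ, x ≠ 1 → HasDerivAt D1 (D2 x) x := by
    intro x hx
    have htx : (1 : ℝ) - x ≠ 0 := sub_ne_zero.mpr (Ne.symm hx)
    have h1 : HasDerivAt (fun y : ℝ => 1 - y) (-1) x := (hasDerivAt_id x).const_sub 1
    have hp1 : HasDerivAt (fun y : ℝ => (1 - y) ^ (N + 1))
        ((↑(N + 1) : ℝ) * (1 - x) ^ N * (-1)) x := by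
      have := (hasDerivAt_pow (N + 1) (1 - x)).comp x h1
      simpa [Function.comp_def] using this
    have hp2 : HasDerivAt (fun y : ℝ => (1 - y) ^ (N + 2))
        ((↑(N + 2) : ℝ) * (1 - x) ^ (N + 1) * (-1)) x := by
      have := (hasDerivAt_pow (N + 2) (1 - x)).comp x h1
      simpa [Function.comp_def] using this
    have hFu : HasDerivAt (fun y => F (a * y / (1 - y)))
        (deriv F (a * x / (1 - x)) * (a / (1 - x) ^ 2)) x :=
      (hF _).hasDerivAt.comp x (hu x hx)
    have hFu' : HasDerivAt (fun y => deriv F (a * y / (1 - y)))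
        (deriv (deriv F) (a * x / (1 - x)) * (a / (1 - x) ^ 2)) x :=
      (hF' _).hasDerivAt.comp x (hu x hx)
    have hf := ((hFu.const_mul (N : ℝ)).div hp1 (pow_ne_zero _ htx))
    have hg := ((hFu'.const_mul a).div hp2 (pow_ne_zero _ htx))
    have := hf.add hg
    refine this.congr_deriv ?_
    rw [hD2def]
    field_simp
    push_cast
    ring
  have hev : deriv G =ᶠ[nhds s] D1 := by
    filter_upwards [isOpen_ne.mem_nhds hs] with x hx using (hD1 x hx).deriv
  have e1 : deriv (deriv (fun s' => M s' a)) s = D2 s := by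
    rw [hMG, hev.deriv_eq, (hD2 s hs).deriv]
  have e2 : deriv (fun s' => M s' a) s = D1 s := by
    rw [hMG, (hD1 s hs).deriv]
  rw [e1, e2, hM]
  have hK := hKummer (a * s / (1 - s))
  have eM : (1 - s) ^ (-(N : ℤ)) = ((1 - s) ^ N)⁻¹ := by rw [zpow_neg, zpow_natCast]
  rw [hD1def, hD2def, eM]
  field_simp at hK
  have expand : s * (1 - s) ^ 2 *
        ((N : ℝ) * ((N : ℝ) + 1) * F (a * s / (1 - s)) / (1 - s) ^ (N + 2) +
          a * (2 * (N : ℝ) + 2) * deriv F (a * s / (1 - s)) / (1 - s) ^ (N + 3) +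
          a ^ 2 * deriv (deriv F) (a * s / (1 - s)) / (1 - s) ^ (N + 4))
      - (2 * ((N : ℝ) + 1) * s * (1 - s) - (1 - s) * (NR : ℝ) + a * s)
          * ((N : ℝ) * F (a * s / (1 - s)) / (1 - s) ^ (N + 1)
            + a * deriv F (a * s / (1 - s)) / (1 - s) ^ (N + 2))
      + (N : ℝ) * (((N : ℝ) + 1) * s - (NR : ℝ) - a) * (((1 - s) ^ N)⁻¹ * F (a * s / (1 - s)))
      = a / ((1 - s) ^ N * (1 - s) ^ 2) *
          (a * s * deriv (deriv F) (a * s / (1 - s))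
            + ((NR : ℝ) * (1 - s) - a * s) * deriv F (a * s / (1 - s))
            - (1 - s) * ((N : ℝ) * F (a * s / (1 - s)))) := by
    have hP : (1 - s) ^ N ≠ 0 := pow_ne_zero _ hts
    generalize F (a * s / (1 - s)) = f0
    generalize deriv F (a * s / (1 - s)) = f1
    generalize deriv (deriv F) (a * s / (1 - s)) = f2
    simp only [pow_add, pow_one]
    field_simp
    ring
  rw [expand]
  convert mul_zero (a / ((1 - s) ^ N * (1 - s) ^ 2)) using 2
  linear_combination hK
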